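/- Let k>0, ε>0, θ₁∈(-π/2,π/2), θ̃∈ℝ² with |θ̃|=|sin θ₁|, and n∈ℤ². Write z_n := (k+iε)²cos²θ₁ − 2(k+iε)(n·θ̃) − |n|². If Re z_n ≥ 0, then Im z_n > 0. -/
import Mathlib


open Complex Real

/-- with `z_n = (k+iε)²cos²θ₁ − 2(k+iε)(n·θ̃) − |n|²`, if
`Re z_n ≥ 0` then `Im z_n > 0`. -/
theorem im_zn_pos_of_re_nonneg (k ε θ₁ : ℝ) (hk : 0 < k) (hε : 0 < ε)
    (hθ₁ : θ₁ ∈ Set.Ioo (-(Real.pi / 2)) (Real.pi / 2))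
    (θt : ℝ × ℝ) (hθt : Real.sqrt (θt.1 ^ 2 + θt.2 ^ 2) = |Real.sin θ₁|)
    (n : ℤ × ℤ)
    (z : ℂ)
    (hz : z = ((k : ℂ) + ε * Complex.I) ^ 2 * (Real.cos θ₁ : ℂ) ^ 2
        - 2 * ((k : ℂ) + ε * Complex.I) * ((n.1 * θt.1 + n.2 * θt.2 : ℝ) : ℂ)
        - (((n.1 : ℝ) ^ 2 + (n.2 : ℝ) ^ 2 : ℝ) : ℂ))
    (hre : 0 ≤ z.re) : 0 < z.im := by
  subst hz
  have hc := Real.cos_pos_of_mem_Ioo hθ₁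
  simp only [pow_two, Complex.sub_re, Complex.sub_im, Complex.mul_re, Complex.mul_im,
    Complex.add_re, Complex.add_im, Complex.ofReal_re, Complex.ofReal_im,
    Complex.I_re, Complex.I_im] at hre ⊢
  norm_num at hre ⊢
  nlinarith [sq_nonneg ((n.1:ℝ)), sq_nonneg ((n.2:ℝ)), mul_pos hε (mul_pos hε (mul_pos hc hc)),
    mul_pos hk (mul_pos hc hc), mul_pos hε hk]
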